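/- For every non-degenerate model with small steps and zero drift, the real vector space ℋ_1 of discrete harmonic functions in the quarter plane is isomorphic, as a real vector space, to the space ℝ[[x]] of formal power series in one variable over ℝ. -/

import Mathlib

open Finset

def SmallStepGrid : Finset (ℤ × ℤ) := ({-1, 0, 1} : Finset ℤ) ×ˢ ({-1, 0, 1} : Finset ℤ)

structure SmallStepModel where
  p : ℤ → ℤ → ℝ
  nonneg : ∀ u v, 0 ≤ p u v
  supp : ∀ u v, p u v ≠ 0 → ((u, v) ∈ SmallStepGrid ∧ (u, v) ≠ (0, 0))
  sum_one : ∑ uv ∈ SmallStepGrid, p uv.1 uv.2 = 1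

def SmallStepModel.ZeroDrift (M : SmallStepModel) : Prop :=
  (∑ uv ∈ SmallStepGrid, (uv.1 : ℝ) * M.p uv.1 uv.2 = 0) ∧
  (∑ uv ∈ SmallStepGrid, (uv.2 : ℝ) * M.p uv.1 uv.2 = 0)

def SmallStepModel.cyc (M : SmallStepModel) : Fin 8 → ℝ :=
  ![M.p 1 1, M.p 1 0, M.p 1 (-1), M.p 0 (-1), M.p (-1) (-1), M.p (-1) 0, M.p (-1) 1,
    M.p 0 1]

def SmallStepModel.NonDegenerate (M : SmallStepModel) : Prop :=
  ∀ k : Fin 8, ¬(M.cyc k = 0 ∧ M.cyc (k + 1) = 0 ∧ M.cyc (k + 2) = 0)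

/-- The discrete Laplacian `Δ̃`: on the interior `V° = {(i,j) : i ≥ 1, j ≥ 1}` of the quarter
plane (points of `ℤ²` outside `V°` playing the role of `∂V` and carrying the value `0`),
`Δ̃f(i,j) = Σ_{(u,v)} p_{u,v} f(i+u, j+v) − f(i,j)`, and `Δ̃f = 0` off `V°`. -/
def lapFun (M : SmallStepModel) (f : ℤ × ℤ → ℝ) : ℤ × ℤ → ℝ :=
  fun z =>
    if 1 ≤ z.1 ∧ 1 ≤ z.2 then
      (∑ uv ∈ SmallStepGrid, M.p uv.1 uv.2 * f (z.1 + uv.1, z.2 + uv.2)) - f z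
    else 0

/-- `Δ̃` as a linear endomorphism of the space of functions on `ℤ²`. -/
noncomputable def lapT (M : SmallStepModel) : (ℤ × ℤ → ℝ) →ₗ[ℝ] (ℤ × ℤ → ℝ) where
  toFun := lapFun M
  map_add' f g := by
    funext z
    simp only [lapFun, Pi.add_apply]
    split
    · simp only [mul_add, Finset.sum_add_distrib]; ring
    · simp
  map_smul' c f := by
    funext z
    simp only [lapFun, Pi.smul_apply, smul_eq_mul, RingHom.id_apply]
    split
    · rw [mul_sub, Finset.mul_sum]
      congr 1
      exact Finset.sum_congr rfl fun uv _ => by ring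
    · simp

/-- The subspace of functions vanishing outside the interior of the quarter plane,
i.e. vanishing on `∂V` (and outside `V`). -/
def boundaryZero : Submodule ℝ (ℤ × ℤ → ℝ) where
  carrier := {f | ∀ z : ℤ × ℤ, ¬(1 ≤ z.1 ∧ 1 ≤ z.2) → f z = 0}
  add_mem' := fun {f g} hf hg z hz => by simp [hf z hz, hg z hz]
  zero_mem' := fun z _ => rfl
  smul_mem' := fun c f hf z hz => by simp [hf z hz]

/-- `ℋ_n`: the real vector space of discrete polyharmonic functions of degree `n` in the
quarter plane (functions vanishing on the boundary with `Δ̃ⁿ f = 0`). -/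
noncomputable def polySpace (M : SmallStepModel) (n : ℕ) : Submodule ℝ (ℤ × ℤ → ℝ) :=
  boundaryZero ⊓ LinearMap.ker ((lapT M) ^ n)



structure GoodChoice (M : SmallStepModel) where
  u₀ : ℤ
  v₀ : ℤ
  a : ℤ
  b : ℤ
  hu0 : 0 ≤ u₀
  hu1 : u₀ ≤ 1
  hv0 : 0 ≤ v₀
  hv1 : v₀ ≤ 1
  hne : ¬(u₀ = 0 ∧ v₀ = 0)
  ha : 1 ≤ a
  hb : 1 ≤ b
  hp : M.p u₀ v₀ ≠ 0
  hmax : ∀ u v : ℤ, M.p u v ≠ 0 → ¬(u = u₀ ∧ v = v₀) → a * u + b * v < a * u₀ + b * v₀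

theorem exists_goodChoice (M : SmallStepModel) (hnd : M.NonDegenerate) (hzd : M.ZeroDrift) :
    Nonempty (GoodChoice M) := by
  have memrange : ∀ u v : ℤ, M.p u v ≠ 0 → (u = -1 ∨ u = 0 ∨ u = 1) ∧ (v = -1 ∨ v = 0 ∨ v = 1) := by
    intro u v h
    have := (M.supp u v h).1
    simpa [SmallStepGrid] using this
  by_cases h11 : M.p 1 1 = 0
  · by_cases h10 : M.p 1 0 = 0
    · by_cases h01 : M.p 0 1 = 0
      · -- contradiction case
        exfalso
        have hX : ∑ uv ∈ SmallStepGrid, (uv.1 : ℝ) * M.p uv.1 uv.2 =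
            -(M.p (-1) (-1)) + -(M.p (-1) 0) + -(M.p (-1) 1) +
            (M.p 1 (-1) + M.p 1 0 + M.p 1 1) := by
          simp [SmallStepGrid, Finset.sum_product]; ring
        have hY : ∑ uv ∈ SmallStepGrid, (uv.2 : ℝ) * M.p uv.1 uv.2 =
            -(M.p (-1) (-1)) + -(M.p 0 (-1)) + -(M.p 1 (-1)) +
            (M.p (-1) 1 + M.p 0 1 + M.p 1 1) := by
          simp [SmallStepGrid, Finset.sum_product]; ring
        have e1 := hzd.1; rw [hX] at e1
        have e2 := hzd.2; rw [hY] at e2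
        have n1 := M.nonneg (-1) (-1)
        have n2 := M.nonneg (-1) 0
        have n3 := M.nonneg 0 (-1)
        have hmm : M.p (-1) (-1) = 0 := by linarith
        have hm0 : M.p (-1) 0 = 0 := by linarith
        have h0m : M.p 0 (-1) = 0 := by linarith
        exact hnd 3 ⟨by simpa [SmallStepModel.cyc] using h0m,
          by simpa [SmallStepModel.cyc] using hmm,
          by simpa [SmallStepModel.cyc] using hm0⟩
      · -- choose (0,1), (a,b) = (1,2)
        exact ⟨0, 1, 1, 2, by norm_num, by norm_num, by norm_num, by norm_num, by norm_num,
          by norm_num, by norm_num, h01, by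
            intro u v hp hne
            obtain ⟨hu, hv⟩ := memrange u v hp
            rcases hu with rfl | rfl | rfl <;> rcases hv with rfl | rfl | rfl <;>
              first
                | exact absurd h11 hp
                | omega⟩
    · -- choose (1,0), (a,b)=(2,1)
      exact ⟨1, 0, 2, 1, by norm_num, by norm_num, by norm_num, by norm_num, by norm_num,
        by norm_num, by norm_num, h10, by
          intro u v hp hne
          obtain ⟨hu, hv⟩ := memrange u v hp
          rcases hu with rfl | rfl | rfl <;> rcases hv with rfl | rfl | rfl <;>
            first
              | exact absurd h11 hp
              | omega⟩
  · -- choose (1,1), (a,b)=(1,1)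
    refine ⟨1, 1, 1, 1, by norm_num, by norm_num, by norm_num, by norm_num, by norm_num,
      by norm_num, by norm_num, h11, ?_⟩
    intro u v hp hne
    obtain ⟨hu, hv⟩ := memrange u v hp
    rcases hu with rfl | rfl | rfl <;> rcases hv with rfl | rfl | rfl <;>
      omega

lemma GoodChoice.topkey_pos {M : SmallStepModel} (C : GoodChoice M) :
    0 < C.a * C.u₀ + C.b * C.v₀ := by
  have h1 := C.hu0; have h2 := C.hu1; have h3 := C.hv0; have h4 := C.hv1
  have h5 := C.ha; have h6 := C.hb; have h7 := C.hne
  have hu : C.u₀ = 0 ∨ C.u₀ = 1 := by omega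
  have hv : C.v₀ = 0 ∨ C.v₀ = 1 := by omega
  rcases hu with hu | hu <;> rcases hv with hv | hv <;> rw [hu, hv] <;> first | omega | simp_all

lemma GoodChoice.key_pos {M : SmallStepModel} (C : GoodChoice M) {z : ℤ × ℤ}
    (hz : 1 ≤ z.1 ∧ 1 ≤ z.2) : 0 < C.a * z.1 + C.b * z.2 := by
  have h5 := C.ha; have h6 := C.hb
  nlinarith [hz.1, hz.2]

lemma toNat_key_lt {k k' : ℤ} (h : k' < k) (hk : 0 < k) : k'.toNat < k.toNat := by omega

noncomputable def solve (M : SmallStepModel) (C : GoodChoice M) (g : ℤ × ℤ → ℝ)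
    (z : ℤ × ℤ) : ℝ :=
  if hz : 1 ≤ z.1 ∧ 1 ≤ z.2 then
    if hw : 1 ≤ z.1 - C.u₀ ∧ 1 ≤ z.2 - C.v₀ then
      (M.p C.u₀ C.v₀)⁻¹ * (solve M C g (z.1 - C.u₀, z.2 - C.v₀) -
        ∑ uv ∈ (SmallStepGrid.erase (C.u₀, C.v₀)).attach,
          if hpz : M.p uv.1.1 uv.1.2 = 0 then 0
          else M.p uv.1.1 uv.1.2 * solve M C g (z.1 - C.u₀ + uv.1.1, z.2 - C.v₀ + uv.1.2))
    else g z
  else 0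
termination_by (C.a * z.1 + C.b * z.2).toNat
decreasing_by
  · apply toNat_key_lt _ (C.key_pos hz)
    have := C.topkey_pos
    nlinarith []
  · apply toNat_key_lt _ (C.key_pos hz)
    have hmem := Finset.mem_erase.mp uv.2
    have hne' : ¬(uv.1.1 = C.u₀ ∧ uv.1.2 = C.v₀) := fun hc =>
      hmem.1 (Prod.ext hc.1 hc.2)
    have := C.hmax uv.1.1 uv.1.2 hpz hne'
    nlinarith []

section
variable (M : SmallStepModel) (C : GoodChoice M) (g : ℤ × ℤ → ℝ)

lemma solve_boundary {z : ℤ × ℤ} (h : ¬(1 ≤ z.1 ∧ 1 ≤ z.2)) : solve M C g z = 0 := by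
  rw [solve]; exact dif_neg h

lemma solve_free {z : ℤ × ℤ} (hz : 1 ≤ z.1 ∧ 1 ≤ z.2)
    (hw : ¬(1 ≤ z.1 - C.u₀ ∧ 1 ≤ z.2 - C.v₀)) : solve M C g z = g z := by
  rw [solve]; rw [dif_pos hz, dif_neg hw]

lemma solve_rec {z : ℤ × ℤ} (hz : 1 ≤ z.1 ∧ 1 ≤ z.2)
    (hw : 1 ≤ z.1 - C.u₀ ∧ 1 ≤ z.2 - C.v₀) :
    M.p C.u₀ C.v₀ * solve M C g z =
      solve M C g (z.1 - C.u₀, z.2 - C.v₀) -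
        ∑ uv ∈ SmallStepGrid.erase (C.u₀, C.v₀),
          M.p uv.1 uv.2 * solve M C g (z.1 - C.u₀ + uv.1, z.2 - C.v₀ + uv.2) := by
  conv_lhs => rw [solve]
  rw [dif_pos hz, dif_pos hw, mul_inv_cancel_left₀ C.hp]
  congr 1
  rw [← Finset.sum_attach (SmallStepGrid.erase (C.u₀, C.v₀))
    (fun uv => M.p uv.1 uv.2 * solve M C g (z.1 - C.u₀ + uv.1, z.2 - C.v₀ + uv.2))]
  refine Finset.sum_congr rfl fun x _ => ?_
  by_cases hx : M.p x.1.1 x.1.2 = 0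
  · rw [dif_pos hx, hx, zero_mul]
  · rw [dif_neg hx]

lemma mem_grid_of_choice : (C.u₀, C.v₀) ∈ SmallStepGrid := by
  have h1 := C.hu0; have h2 := C.hu1; have h3 := C.hv0; have h4 := C.hv1
  simp [SmallStepGrid]; omega

lemma solve_harmonic : ∀ z : ℤ × ℤ, lapFun M (solve M C g) z = 0 := by
  intro z
  rw [lapFun]
  by_cases hz : 1 ≤ z.1 ∧ 1 ≤ z.2
  · rw [if_pos hz]
    set t : ℤ × ℤ := (z.1 + C.u₀, z.2 + C.v₀) with ht
    have hzt : 1 ≤ t.1 ∧ 1 ≤ t.2 := by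
      constructor <;> simp [ht] <;> [have := C.hu0; have := C.hv0] <;> omega
    have hwt : 1 ≤ t.1 - C.u₀ ∧ 1 ≤ t.2 - C.v₀ := by
      constructor <;> simp [ht] <;> omega
    have hrec := solve_rec M C g hzt hwt
    have hsimp1 : (t.1 - C.u₀, t.2 - C.v₀) = z := by simp [ht]
    rw [hsimp1] at hrec
    rw [← Finset.add_sum_erase SmallStepGrid
      (fun uv => M.p uv.1 uv.2 * solve M C g (z.1 + uv.1, z.2 + uv.2)) (mem_grid_of_choice M C)]
    have hsum : ∑ uv ∈ SmallStepGrid.erase (C.u₀, C.v₀),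
          M.p uv.1 uv.2 * solve M C g (t.1 - C.u₀ + uv.1, t.2 - C.v₀ + uv.2) =
        ∑ uv ∈ SmallStepGrid.erase (C.u₀, C.v₀),
          M.p uv.1 uv.2 * solve M C g (z.1 + uv.1, z.2 + uv.2) := by
      refine Finset.sum_congr rfl fun x _ => ?_
      simp [ht]
    rw [hsum] at hrec
    have : solve M C g (z.1 + C.u₀, z.2 + C.v₀) = solve M C g t := by rw [ht]
    rw [this]
    linarith [hrec]
  · rw [if_neg hz]
end


lemma toNat_key_le {k k' : ℤ} {n : ℕ} (h : k' < k) (hk : k.toNat ≤ n + 1) : k'.toNat ≤ n := by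
  omega

lemma harmonic_zero_of_free_zero (M : SmallStepModel) (C : GoodChoice M) (f : ℤ × ℤ → ℝ)
    (hb : ∀ z : ℤ × ℤ, ¬(1 ≤ z.1 ∧ 1 ≤ z.2) → f z = 0)
    (hh : ∀ z : ℤ × ℤ, lapFun M f z = 0)
    (hF : ∀ z : ℤ × ℤ, (1 ≤ z.1 ∧ 1 ≤ z.2) → ¬(1 ≤ z.1 - C.u₀ ∧ 1 ≤ z.2 - C.v₀) → f z = 0) :
    ∀ z, f z = 0 := by
  suffices H : ∀ n : ℕ, ∀ z : ℤ × ℤ, (C.a * z.1 + C.b * z.2).toNat ≤ n → f z = 0 by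
    intro z; exact H _ z le_rfl
  intro n
  induction n with
  | zero =>
    intro z hz0
    by_cases hz : 1 ≤ z.1 ∧ 1 ≤ z.2
    · exfalso; have := C.key_pos hz; omega
    · exact hb z hz
  | succ n ih =>
    intro z hzn
    by_cases hz : 1 ≤ z.1 ∧ 1 ≤ z.2
    · by_cases hw : 1 ≤ z.1 - C.u₀ ∧ 1 ≤ z.2 - C.v₀
      · have hkz : 0 < C.a * z.1 + C.b * z.2 := C.key_pos hz
        have heq := hh (z.1 - C.u₀, z.2 - C.v₀)
        rw [lapFun] at heq
        rw [if_pos hw] at heq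
        rw [← Finset.add_sum_erase SmallStepGrid
          (fun uv => M.p uv.1 uv.2 * f (z.1 - C.u₀ + uv.1, z.2 - C.v₀ + uv.2))
          (mem_grid_of_choice M C)] at heq
        have hwz : ((z.1 - C.u₀) + C.u₀, (z.2 - C.v₀) + C.v₀) = z := by
          apply Prod.ext <;> simp
        simp only at heq
        rw [hwz] at heq
        have hfw : f (z.1 - C.u₀, z.2 - C.v₀) = 0 := by
          apply ih
          refine toNat_key_le ?_ hzn
          show C.a * (z.1 - C.u₀) + C.b * (z.2 - C.v₀) < C.a * z.1 + C.b * z.2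
          have := C.topkey_pos
          nlinarith []
        have hterm : ∀ uv ∈ SmallStepGrid.erase (C.u₀, C.v₀),
            M.p uv.1 uv.2 * f (z.1 - C.u₀ + uv.1, z.2 - C.v₀ + uv.2) = 0 := by
          intro uv hm
          by_cases hp0 : M.p uv.1 uv.2 = 0
          · rw [hp0, zero_mul]
          · have hne' : ¬(uv.1 = C.u₀ ∧ uv.2 = C.v₀) := fun hc =>
              (Finset.mem_erase.mp hm).1 (Prod.ext hc.1 hc.2)
            have hlt := C.hmax uv.1 uv.2 hp0 hne'
            have hzero : f (z.1 - C.u₀ + uv.1, z.2 - C.v₀ + uv.2) = 0 := by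
              apply ih
              refine toNat_key_le ?_ hzn
              show C.a * (z.1 - C.u₀ + uv.1) + C.b * (z.2 - C.v₀ + uv.2) < C.a * z.1 + C.b * z.2
              nlinarith []
            rw [hzero, mul_zero]
        rw [Finset.sum_eq_zero hterm, hfw] at heq
        have hz0 : M.p C.u₀ C.v₀ * f z = 0 := by linarith
        exact (mul_eq_zero.mp hz0).resolve_left C.hp
      · exact hF z hz hw
    · exact hb z hz


lemma mem_polySpace_one_iff (M : SmallStepModel) (f : ℤ × ℤ → ℝ) :
    f ∈ polySpace M 1 ↔
      (∀ z : ℤ × ℤ, ¬(1 ≤ z.1 ∧ 1 ≤ z.2) → f z = 0) ∧ ∀ z : ℤ × ℤ, lapFun M f z = 0 := by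
  rw [polySpace, Submodule.mem_inf, LinearMap.mem_ker, pow_one]
  constructor
  · rintro ⟨h1, h2⟩
    exact ⟨h1, fun z => congrFun h2 z⟩
  · rintro ⟨h1, h2⟩
    exact ⟨h1, funext fun z => h2 z⟩

noncomputable def powerSeriesEquiv : (ℕ → ℝ) ≃ₗ[ℝ] PowerSeries ℝ where
  toFun f := PowerSeries.mk f
  invFun φ n := PowerSeries.coeff n φ
  map_add' f g := by
    ext n
    simp [PowerSeries.coeff_mk]
  map_smul' c f := by
    ext n
    simp [PowerSeries.coeff_mk]
  left_inv f := by
    funext n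
    simp [PowerSeries.coeff_mk]
  right_inv φ := by
    ext n
    simp [PowerSeries.coeff_mk]

theorem harmonicSpace_linearEquiv_powerSeries' (M : SmallStepModel)
    (hnd : M.NonDegenerate) (hzd : M.ZeroDrift) :
    Nonempty ((polySpace M 1) ≃ₗ[ℝ] PowerSeries ℝ) := by
  obtain ⟨C⟩ := exists_goodChoice M hnd hzd
  set Fp : ℤ × ℤ → Prop :=
    fun z => (1 ≤ z.1 ∧ 1 ≤ z.2) ∧ ¬(1 ≤ z.1 - C.u₀ ∧ 1 ≤ z.2 - C.v₀) with hFp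
  let Φ : (polySpace M 1) →ₗ[ℝ] ({z : ℤ × ℤ // Fp z} → ℝ) :=
    { toFun := fun f s => (f : ℤ × ℤ → ℝ) s.1
      map_add' := fun f g => rfl
      map_smul' := fun c f => rfl }
  have hΦ : ∀ (f : polySpace M 1) (s : {z : ℤ × ℤ // Fp z}), Φ f s = (f : ℤ × ℤ → ℝ) s.1 :=
    fun f s => rfl
  have hinj : Function.Injective Φ := by
    intro f g hfg
    apply Subtype.ext
    funext z
    have hmf := (mem_polySpace_one_iff M f.1).mp f.2
    have hmg := (mem_polySpace_one_iff M g.1).mp g.2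
    have hhd : ∀ z : ℤ × ℤ, lapFun M (f.1 - g.1) z = 0 := by
      intro z
      have hsub : lapT M (f.1 - g.1) = lapT M f.1 - lapT M g.1 := map_sub _ _ _
      calc lapFun M (f.1 - g.1) z = (lapT M (f.1 - g.1)) z := rfl
        _ = (lapT M f.1) z - (lapT M g.1) z := by rw [hsub]; rfl
        _ = 0 := by
            rw [show (lapT M f.1) z = lapFun M f.1 z from rfl,
              show (lapT M g.1) z = lapFun M g.1 z from rfl, hmf.2 z, hmg.2 z, sub_zero]
    have hzero := harmonic_zero_of_free_zero M C (f.1 - g.1)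
      (fun z hz => by simp [Pi.sub_apply, hmf.1 z hz, hmg.1 z hz]) hhd
      (fun z hz hw => by
        have hc := congrFun hfg ⟨z, hz, hw⟩
        rw [hΦ, hΦ] at hc
        simp [Pi.sub_apply, hc])
    have := hzero z
    rw [Pi.sub_apply, sub_eq_zero] at this
    exact this
  have hsurj : Function.Surjective Φ := by
    intro g
    refine ⟨⟨solve M C (fun z => if h : Fp z then g ⟨z, h⟩ else 0), ?_⟩, ?_⟩
    · rw [mem_polySpace_one_iff]
      exact ⟨fun z hz => solve_boundary M C _ hz, solve_harmonic M C _⟩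
    · funext s
      rw [hΦ]
      show solve M C _ s.1 = g s
      rw [solve_free M C _ s.2.1 s.2.2, dif_pos s.2]
  have hinf : Infinite {z : ℤ × ℤ // Fp z} := by
    have hcase : C.u₀ = 1 ∨ C.v₀ = 1 := by
      have h1 := C.hu0; have h2 := C.hu1; have h3 := C.hv0; have h4 := C.hv1
      have h5 := C.hne; omega
    rcases hcase with h | h
    · refine Infinite.of_injective
        (fun n : ℕ => (⟨(1, (n : ℤ) + 1), ⟨⟨le_refl 1, by omega⟩, ?_⟩⟩ : {z : ℤ × ℤ // Fp z})) ?_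
      · rw [h]; rintro ⟨h1, -⟩; omega
      · intro m n hmn
        have := congrArg (fun s : {z : ℤ × ℤ // Fp z} => s.1.2) hmn
        simp only at this
        omega
    · refine Infinite.of_injective
        (fun n : ℕ => (⟨((n : ℤ) + 1, 1), ⟨⟨by omega, le_refl 1⟩, ?_⟩⟩ : {z : ℤ × ℤ // Fp z})) ?_
      · rw [h]; rintro ⟨-, h2⟩; omega
      · intro m n hmn
        have := congrArg (fun s : {z : ℤ × ℤ // Fp z} => s.1.1) hmn
        simp only at this
        omega
  haveI := hinf
  haveI : Encodable {z : ℤ × ℤ // Fp z} := Encodable.ofCountable _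
  haveI : Denumerable {z : ℤ × ℤ // Fp z} := Denumerable.ofEncodableOfInfinite _
  let e2 : {z : ℤ × ℤ // Fp z} ≃ ℕ := Denumerable.eqv _
  exact ⟨(LinearEquiv.ofBijective Φ ⟨hinj, hsurj⟩).trans
    ((LinearEquiv.funCongrLeft ℝ ℝ e2.symm).trans powerSeriesEquiv)⟩

/-- For every non-degenerate model with small steps and zero drift, the space `ℋ_1` of
discrete harmonic functions in the quarter plane is isomorphic, as a real vector space,
to the space `ℝ[[x]]` of formal power series in one variable over `ℝ`. -/
theorem harmonicSpace_linearEquiv_powerSeries (M : SmallStepModel)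
    (hnd : M.NonDegenerate) (hzd : M.ZeroDrift) :
    Nonempty ((polySpace M 1) ≃ₗ[ℝ] PowerSeries ℝ) := by
  exact harmonicSpace_linearEquiv_powerSeries' M hnd hzd
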